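/- The map Proj : D → P_ed(ω₂) has the projection property: for every r₀ ∈ D and every p₁ ∈ P_ed(ω₂) with p₁ ≤ Proj(r₀), there exists r₂ ∈ D with r₂ ≤ r₀ in R and Proj(r₂) ≤ p₁ in P_ed(ω₂). -/

import Mathlib

universe u v

/-- A condition in the eventually-different poset over `I`. -/
@[ext] structure EDCond (I : Type u) : Type u where
  len : ℕ
  dom : Finset I
  f : I → ℕ → ℕ
  junk : ∀ α i, α ∉ dom ∨ len ≤ i → f α i = 0

/-- The order of the eventually-different poset. -/
instance EDCond.instPartialOrder (I : Type u) : PartialOrder (EDCond I) where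
  le p q := q.dom ⊆ p.dom ∧ q.len ≤ p.len ∧
    (∀ α ∈ q.dom, ∀ i < q.len, p.f α i = q.f α i) ∧
    (∀ i, q.len ≤ i → i < p.len → ∀ α ∈ q.dom, ∀ β ∈ q.dom, α ≠ β → p.f α i ≠ p.f β i)
  le_refl p := ⟨Finset.Subset.refl _, le_refl _, fun _ _ _ _ => rfl,
    fun i hi hi' => absurd hi' (by omega)⟩
  le_trans p q r hpq hqr := by
    obtain ⟨hd1, hn1, hv1, hg1⟩ := hpq
    obtain ⟨hd2, hn2, hv2, hg2⟩ := hqr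
    refine ⟨hd2.trans hd1, hn2.trans hn1, ?_, ?_⟩
    · intro α hα i hi
      rw [hv1 α (hd2 hα) i (lt_of_lt_of_le hi hn2), hv2 α hα i hi]
    · intro i hi hi' α hα β hβ hαβ
      by_cases hq : i < q.len
      · rw [hv1 α (hd2 hα) i hq, hv1 β (hd2 hβ) i hq]
        exact hg2 i hi hq α hα β hβ hαβ
      · exact hg1 i (by omega) hi' α (hd2 hα) β (hd2 hβ) hαβ
  le_antisymm p q hpq hqp := by
    obtain ⟨hd1, hn1, hv1, -⟩ := hpq
    obtain ⟨hd2, hn2, hv2, -⟩ := hqp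
    have hdom : p.dom = q.dom := Finset.Subset.antisymm hd2 hd1
    have hlen : p.len = q.len := le_antisymm hn2 hn1
    have hf : p.f = q.f := by
      funext α i
      by_cases hα : α ∈ q.dom
      · by_cases hi : i < q.len
        · exact hv1 α hα i hi
        · rw [p.junk α i (Or.inr (by omega)), q.junk α i (Or.inr (by omega))]
      · rw [p.junk α i (Or.inl (hdom ▸ hα)), q.junk α i (Or.inl hα)]
    exact EDCond.ext hlen hdom hf

/-- A condition of the poset `R`. -/
@[ext] structure RCond (ι : Type u) : Type u where
  d0 : Finset ι
  d1 : Finset ι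
  v0 : ι → List ℕ
  v1 : ι → ℕ
  hasStar : Bool
  star : Finset (List ℕ × ℕ)
  junk0 : ∀ α ∉ d0, v0 α = []
  junk1 : ∀ α ∉ d1, v1 α = 0
  junkStar : hasStar = false → star = ∅
  starFun : ∀ σ m m', (σ, m) ∈ star → (σ, m') ∈ star → m = m'
  starInj : ∀ σ τ m, (σ, m) ∈ star → (τ, m) ∈ star → σ.length = τ.length → σ = τ

/-- Conditions in `R` are ordered by coordinatewise extension. -/
instance RCond.instPartialOrder (ι : Type u) : PartialOrder (RCond ι) where
  le r₁ r₀ := r₀.d0 ⊆ r₁.d0 ∧ r₀.d1 ⊆ r₁.d1 ∧ (r₀.hasStar = true → r₁.hasStar = true) ∧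
    (∀ α ∈ r₀.d0, r₀.v0 α <+: r₁.v0 α) ∧ (∀ α ∈ r₀.d1, r₀.v1 α = r₁.v1 α) ∧
    (r₀.hasStar = true → r₀.star ⊆ r₁.star)
  le_refl r := ⟨Finset.Subset.refl _, Finset.Subset.refl _, fun h => h,
    fun _ _ => List.prefix_refl _, fun _ _ => rfl, fun _ => Finset.Subset.refl _⟩
  le_trans p q r hpq hqr := by
    obtain ⟨ha1, hb1, hs1, hv1, hw1, hx1⟩ := hpq
    obtain ⟨ha2, hb2, hs2, hv2, hw2, hx2⟩ := hqr
    refine ⟨ha2.trans ha1, hb2.trans hb1, fun h => hs1 (hs2 h), ?_, ?_, ?_⟩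
    · exact fun α hα => (hv2 α hα).trans (hv1 α (ha2 hα))
    · exact fun α hα => (hw2 α hα).trans (hw1 α (hb2 hα))
    · exact fun h => (hx2 h).trans (hx1 (hs2 h))
  le_antisymm p q hpq hqp := by
    obtain ⟨ha1, hb1, hs1, hv1, hw1, hx1⟩ := hpq
    obtain ⟨ha2, hb2, hs2, hv2, hw2, hx2⟩ := hqp
    have hd0 : p.d0 = q.d0 := Finset.Subset.antisymm ha2 ha1
    have hd1 : p.d1 = q.d1 := Finset.Subset.antisymm hb2 hb1
    have hstar : p.hasStar = q.hasStar := by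
      revert hs1 hs2
      cases p.hasStar <;> cases q.hasStar <;> simp
    have hv : p.v0 = q.v0 := by
      funext α
      by_cases hα : α ∈ q.d0
      · exact ((hv2 α (hd0 ▸ hα)).eq_of_length
          (Nat.le_antisymm (hv2 α (hd0 ▸ hα)).length_le (hv1 α hα).length_le))
      · rw [p.junk0 α (hd0 ▸ hα), q.junk0 α hα]
    have hw : p.v1 = q.v1 := by
      funext α
      by_cases hα : α ∈ q.d1
      · exact (hw1 α hα).symm
      · rw [p.junk1 α (hd1 ▸ hα), q.junk1 α hα]
    have hst : p.star = q.star := by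
      by_cases hq : q.hasStar = true
      · exact Finset.Subset.antisymm (hx2 (hstar ▸ hq)) (hx1 hq)
      · rw [p.junkStar (by rw [hstar]; exact Bool.not_eq_true _ ▸ (by simpa using hq)),
          q.junkStar (by simpa using hq)]
    exact RCond.ext hd0 hd1 hv hw hstar hst

/-- Membership of `r` (with associated number `n`) in the set `D`. -/
def RCond.InD {ι : Type u} (r : RCond ι) (n : ℕ) : Prop :=
  r.hasStar = true ∧ r.d0 = r.d1 ∧ (∀ α ∈ r.d0, (r.v0 α).length = n) ∧
    (∀ α ∈ r.d0, ∀ β ∈ r.d0, α ≠ β → r.v0 α ≠ r.v0 β) ∧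
    (∀ α ∈ r.d1, r.v1 α ≤ n) ∧
    (∀ σ : List ℕ, (∃ m, (σ, m) ∈ r.star) ↔ ∃ α ∈ r.d0, σ <+: r.v0 α)

/-- The subset `D` of the poset `R`. -/
def RCond.D (ι : Type u) : Set (RCond ι) := {r | ∃ n : ℕ, r.InD n}

/-- The canonical number `n_r` associated to a condition `r ∈ D`. -/
noncomputable def RCond.nOf {ι : Type u} (r : RCond ι) : ℕ :=
  if h : r.d0.Nonempty then (r.v0 h.choose).length else 0

open scoped Classical in
/-- The value of the finite partial function `r (∗)` at `σ`. -/
noncomputable def RCond.starVal {ι : Type u} (r : RCond ι) (σ : List ℕ) : ℕ :=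
  if h : ∃ m, (σ, m) ∈ r.star then h.choose else 0

open scoped Classical in
/-- The projection `Proj : D → P_ed(ω₂)`:  `Proj r` has domain `{α | (α,0) ∈ dom r}`,
`n_{Proj r} = n_r`, and `Proj r α n = r (α,0) n` for `n < r (α,1)` while
`Proj r α n = r ∗ (r (α,0) ↾ (n+1))` for `r (α,1) ≤ n < n_r`. -/
noncomputable def RCond.proj {ι : Type u} (r : RCond ι) : EDCond ι where
  len := r.nOf
  dom := r.d0
  f := fun α i =>
    if α ∈ r.d0 ∧ i < r.nOf then
      (if i < r.v1 α then (r.v0 α).getD i 0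
       else r.starVal ((r.v0 α).take (i + 1)))
    else 0
  junk := by
    intro α i h
    try beta_reduce
    rw [if_neg]
    rintro ⟨h1, h2⟩
    rcases h with h | h
    · exact h h1
    · omega

/-- The ordinal `ω₂`. -/
noncomputable def omega2 : Ordinal.{0} := (Cardinal.aleph 2).ord

/-- `ω₂` as a set (type) of ordinals. -/
def Omega2T : Type 1 := {o : Ordinal.{0} // o < omega2}


namespace Proj16

open scoped Classical

theorem nOf_eq {ι : Type u} (r : RCond ι) {n : ℕ} (hne : r.d0.Nonempty)
    (h : ∀ α ∈ r.d0, (r.v0 α).length = n) : r.nOf = n := by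
  rw [RCond.nOf, dif_pos hne]
  exact h _ hne.choose_spec

theorem starVal_mem {ι : Type u} (r : RCond ι) {σ : List ℕ} (h : ∃ m, (σ, m) ∈ r.star) :
    (σ, r.starVal σ) ∈ r.star := by
  rw [RCond.starVal, dif_pos h]
  exact h.choose_spec

theorem starVal_eq {ι : Type u} (r : RCond ι) {σ : List ℕ} {m : ℕ} (hm : (σ, m) ∈ r.star) :
    r.starVal σ = m :=
  r.starFun σ _ _ (starVal_mem r ⟨m, hm⟩) hm

theorem proj_f_lt {ι : Type u} (r : RCond ι) {α : ι} {i : ℕ} (hα : α ∈ r.d0) (hi : i < r.nOf)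
    (h : i < r.v1 α) : r.proj.f α i = (r.v0 α).getD i 0 := by
  simp only [RCond.proj]
  rw [if_pos ⟨hα, hi⟩, if_pos h]

theorem proj_f_ge {ι : Type u} (r : RCond ι) {α : ι} {i : ℕ} (hα : α ∈ r.d0) (hi : i < r.nOf)
    (h : r.v1 α ≤ i) : r.proj.f α i = r.starVal ((r.v0 α).take (i + 1)) := by
  simp only [RCond.proj]
  rw [if_pos ⟨hα, hi⟩, if_neg (by omega)]

structure Setup (ι : Type u) where
  r₀ : RCond ι
  p₁ : EDCond ι
  α₀ : ι
  hlen0 : ∀ α ∈ r₀.d0, (r₀.v0 α).length = r₀.nOf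
  hdist₀ : ∀ α ∈ r₀.d0, ∀ β ∈ r₀.d0, α ≠ β → r₀.v0 α ≠ r₀.v0 β
  hv1₀ : ∀ α ∈ r₀.d0, r₀.v1 α ≤ r₀.nOf
  hdomstar : ∀ σ : List ℕ, (∃ m, (σ, m) ∈ r₀.star) ↔ ∃ α ∈ r₀.d0, σ <+: r₀.v0 α
  hsub : r₀.d0 ⊆ p₁.dom
  hnle : r₀.nOf ≤ p₁.len
  hval : ∀ α ∈ r₀.d0, ∀ i < r₀.nOf, p₁.f α i = r₀.proj.f α i
  hED : ∀ i, r₀.nOf ≤ i → i < p₁.len → ∀ α ∈ r₀.d0, ∀ β ∈ r₀.d0, α ≠ β →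
    p₁.f α i ≠ p₁.f β i

namespace Setup

variable {ι : Type u} (S : Setup ι)

noncomputable def n2 : ℕ := S.p₁.len + 1

noncomputable def dom2 : Finset ι := insert S.α₀ S.p₁.dom

noncomputable def c (α : ι) : ℕ := 1 + S.dom2.toList.idxOf α

noncomputable def v0' (α : ι) : List ℕ :=
  if α ∈ S.r₀.d0 then S.r₀.v0 α ++ List.replicate (S.n2 - S.r₀.nOf) 0
  else if α ∈ S.dom2 then (List.range S.p₁.len).map (S.p₁.f α) ++ [2 * S.c α] else []

noncomputable def v1' (α : ι) : ℕ :=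
  if α ∈ S.r₀.d0 then S.r₀.v1 α else if α ∈ S.dom2 then S.n2 else 0

noncomputable def CC : ℕ := 1 + S.r₀.star.sup Prod.snd +
  S.dom2.sup (fun α => (Finset.range S.n2).sup (S.p₁.f α)) + 2 * (1 + S.dom2.card) + 1

noncomputable def g (σ : List ℕ) : ℕ :=
  if _h0 : ∃ m, (σ, m) ∈ S.r₀.star then S.r₀.starVal σ
  else if h2 : ∃ α, α ∈ S.r₀.d0 ∧ (S.v0' α).take σ.length = σ ∧ S.r₀.nOf < σ.length then
    if σ.length = S.n2 then 2 * S.c h2.choose + 1 else S.p₁.f h2.choose (σ.length - 1)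
  else S.CC + Encodable.encode σ

noncomputable def P : Finset (List ℕ) :=
  S.dom2.biUnion fun α => (Finset.range (S.n2 + 1)).image ((S.v0' α).take ·)

noncomputable def star2 : Finset (List ℕ × ℕ) := S.P.image fun σ => (σ, S.g σ)

theorem n2_def : S.n2 = S.p₁.len + 1 := rfl

theorem old_mem_dom2 {α : ι} (h : α ∈ S.r₀.d0) : α ∈ S.dom2 :=
  Finset.mem_insert_of_mem (S.hsub h)

theorem c_pos (α : ι) : 1 ≤ S.c α := Nat.le_add_right 1 _

theorem c_inj {α β : ι} (hα : α ∈ S.dom2) (hβ : β ∈ S.dom2) (h : S.c α = S.c β) : α = β := by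
  simp only [c] at h
  exact (List.idxOf_inj (y := β) (Finset.mem_toList.mpr hα)).mp (by omega)

theorem v0'_old {α : ι} (h : α ∈ S.r₀.d0) :
    S.v0' α = S.r₀.v0 α ++ List.replicate (S.n2 - S.r₀.nOf) 0 := by
  simp only [v0', if_pos h]

theorem v0'_new {α : ι} (h1 : α ∉ S.r₀.d0) (h2 : α ∈ S.dom2) :
    S.v0' α = (List.range S.p₁.len).map (S.p₁.f α) ++ [2 * S.c α] := by
  simp only [v0']
  rw [if_neg h1, if_pos h2]

theorem prefix_v0' {α : ι} (h : α ∈ S.r₀.d0) : S.r₀.v0 α <+: S.v0' α := by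
  rw [S.v0'_old h]
  exact List.prefix_append _ _

theorem len_v0' : ∀ α ∈ S.dom2, (S.v0' α).length = S.n2 := by
  intro α hα
  have hn := S.hnle
  have hn2 := S.n2_def
  by_cases h : α ∈ S.r₀.d0
  · rw [S.v0'_old h, List.length_append, List.length_replicate, S.hlen0 α h]
    omega
  · rw [S.v0'_new h hα, List.length_append, List.length_map, List.length_range]
    simp [n2]

theorem take_v0'_old {α : ι} {k : ℕ} (h : α ∈ S.r₀.d0) (hk : k ≤ S.r₀.nOf) :
    (S.v0' α).take k = (S.r₀.v0 α).take k := by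
  rw [S.v0'_old h]
  exact List.take_append_of_le_length (by rw [S.hlen0 α h]; exact hk)

theorem getD_old_lt {α : ι} {i : ℕ} (h : α ∈ S.r₀.d0) (hi : i < S.r₀.nOf) :
    (S.v0' α).getD i 0 = (S.r₀.v0 α).getD i 0 := by
  rw [S.v0'_old h]
  exact List.getD_append _ _ _ _ (by rw [S.hlen0 α h]; exact hi)

theorem getD_last_old {α : ι} (h : α ∈ S.r₀.d0) : (S.v0' α).getD S.p₁.len 0 = 0 := by
  have h1 := S.hlen0 α h
  have h2 := S.hnle
  have h3 := S.n2_def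
  rw [S.v0'_old h, List.getD_append_right _ _ _ _ (by omega)]
  rw [List.getD_eq_getElem _ _ (by simp only [List.length_replicate]; omega)]
  simp

theorem getD_new {α : ι} {i : ℕ} (h1 : α ∉ S.r₀.d0) (h2 : α ∈ S.dom2) (hi : i < S.p₁.len) :
    (S.v0' α).getD i 0 = S.p₁.f α i := by
  rw [S.v0'_new h1 h2, List.getD_append _ _ _ _ (by simpa using hi)]
  rw [List.getD_eq_getElem _ _ (by simpa using hi)]
  simp

theorem getD_last_new {α : ι} (h1 : α ∉ S.r₀.d0) (h2 : α ∈ S.dom2) :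
    (S.v0' α).getD S.p₁.len 0 = 2 * S.c α := by
  rw [S.v0'_new h1 h2, List.getD_append_right _ _ _ _ (by simp)]
  simp

theorem star_len {σ : List ℕ} {m : ℕ} (h : (σ, m) ∈ S.r₀.star) : σ.length ≤ S.r₀.nOf := by
  obtain ⟨α, hα, hpre⟩ := (S.hdomstar σ).mp ⟨m, h⟩
  have := hpre.length_le
  rw [S.hlen0 α hα] at this
  exact this

theorem take_unique {α β : ι} {ℓ : ℕ} (hα : α ∈ S.r₀.d0) (hβ : β ∈ S.r₀.d0)
    (hℓ : S.r₀.nOf < ℓ) (h : (S.v0' α).take ℓ = (S.v0' β).take ℓ) : α = β := by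
  by_contra hne
  apply S.hdist₀ α hα β hβ hne
  have h0 : ∀ γ, γ ∈ S.r₀.d0 → ((S.v0' γ).take ℓ).take S.r₀.nOf = S.r₀.v0 γ := by
    intro γ hγ
    rw [List.take_take, min_eq_left (le_of_lt hℓ), S.take_v0'_old hγ le_rfl,
      ← S.hlen0 γ hγ, List.take_length]
  rw [← h0 α hα, ← h0 β hβ, h]

theorem mem_P {σ : List ℕ} : σ ∈ S.P ↔ ∃ α ∈ S.dom2, σ <+: S.v0' α := by
  simp only [P, Finset.mem_biUnion, Finset.mem_image, Finset.mem_range]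
  constructor
  · rintro ⟨α, hα, k, -, rfl⟩
    exact ⟨α, hα, List.take_prefix _ _⟩
  · rintro ⟨α, hα, hp⟩
    refine ⟨α, hα, σ.length, ?_, (List.prefix_iff_eq_take.mp hp).symm⟩
    have := hp.length_le
    rw [S.len_v0' α hα] at this
    omega

theorem len_le_of_mem_P {σ : List ℕ} (h : σ ∈ S.P) : σ.length ≤ S.n2 := by
  obtain ⟨α, hα, hp⟩ := S.mem_P.mp h
  have := hp.length_le
  rw [S.len_v0' α hα] at this
  exact this

theorem bound_star {σ : List ℕ} {m : ℕ} (h : (σ, m) ∈ S.r₀.star) : m < S.CC := by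
  have h1 : m ≤ S.r₀.star.sup Prod.snd := Finset.le_sup (f := Prod.snd) h
  simp only [CC]
  omega

theorem bound_pf {α : ι} {i : ℕ} (hα : α ∈ S.dom2) (hi : i < S.n2) : S.p₁.f α i < S.CC := by
  have h1 : S.p₁.f α i ≤ (Finset.range S.n2).sup (S.p₁.f α) :=
    Finset.le_sup (Finset.mem_range.mpr hi)
  have h2 : (Finset.range S.n2).sup (S.p₁.f α) ≤
      S.dom2.sup (fun α => (Finset.range S.n2).sup (S.p₁.f α)) :=
    Finset.le_sup (f := fun α => (Finset.range S.n2).sup (S.p₁.f α)) hα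
  simp only [CC]
  omega

theorem bound_c {α : ι} (hα : α ∈ S.dom2) : 2 * S.c α + 1 < S.CC := by
  have h1 : S.dom2.toList.idxOf α < S.dom2.toList.length :=
    List.idxOf_lt_length_iff.mpr (Finset.mem_toList.mpr hα)
  have h2 : S.dom2.toList.length = S.dom2.card := Finset.length_toList _
  simp only [CC, c]
  omega

theorem g_A {σ : List ℕ} (h0 : ∃ m, (σ, m) ∈ S.r₀.star) : S.g σ = S.r₀.starVal σ := by
  simp only [g]
  rw [dif_pos h0]

theorem g_B {ρ : List ℕ} {α : ι} (hρ : ρ.length ≤ S.n2) (hα : α ∈ S.r₀.d0)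
    (ht : (S.v0' α).take ρ.length = ρ) (hgt : S.r₀.nOf < ρ.length) :
    S.g ρ = if ρ.length = S.n2 then 2 * S.c α + 1 else S.p₁.f α (ρ.length - 1) := by
  have h0 : ¬ ∃ m, (ρ, m) ∈ S.r₀.star := by
    rintro ⟨m, hm⟩
    have := S.star_len hm
    omega
  have h2 : ∃ β, β ∈ S.r₀.d0 ∧ (S.v0' β).take ρ.length = ρ ∧ S.r₀.nOf < ρ.length := ⟨α, hα, ht, hgt⟩
  have hc : h2.choose = α := by
    obtain ⟨h2a, h2b, h2c⟩ := h2.choose_spec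
    exact S.take_unique h2a hα h2c (by rw [h2b, ht])
  simp only [g]
  rw [dif_neg h0, dif_pos h2, hc]

theorem g_C {σ : List ℕ} (h0 : ¬ ∃ m, (σ, m) ∈ S.r₀.star)
    (h2 : ¬ ∃ α, α ∈ S.r₀.d0 ∧ (S.v0' α).take σ.length = σ ∧ S.r₀.nOf < σ.length) :
    S.g σ = S.CC + Encodable.encode σ := by
  simp only [g]
  rw [dif_neg h0, dif_neg h2]

theorem g_inj {σ τ : List ℕ} (hσ : σ ∈ S.P) (hτ : τ ∈ S.P) (hl : σ.length = τ.length)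
    (he : S.g σ = S.g τ) : σ = τ := by
  have hn2 := S.n2_def
  have hlσ := S.len_le_of_mem_P hσ
  have hlτ := S.len_le_of_mem_P hτ
  by_cases h0σ : ∃ m, (σ, m) ∈ S.r₀.star
  · by_cases h0τ : ∃ m, (τ, m) ∈ S.r₀.star
    · rw [S.g_A h0σ, S.g_A h0τ] at he
      exact S.r₀.starInj σ τ _ (he ▸ starVal_mem S.r₀ h0σ) (starVal_mem S.r₀ h0τ) hl
    · by_cases h2τ : ∃ α, α ∈ S.r₀.d0 ∧ (S.v0' α).take τ.length = τ ∧ S.r₀.nOf < τ.length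
      · obtain ⟨m, hm⟩ := h0σ
        have := S.star_len hm
        obtain ⟨α, hα, ht, hgt⟩ := h2τ
        omega
      · rw [S.g_A h0σ, S.g_C h0τ h2τ] at he
        have := S.bound_star (starVal_mem S.r₀ h0σ)
        omega
  · by_cases h2σ : ∃ α, α ∈ S.r₀.d0 ∧ (S.v0' α).take σ.length = σ ∧ S.r₀.nOf < σ.length
    · by_cases h0τ : ∃ m, (τ, m) ∈ S.r₀.star
      · obtain ⟨m, hm⟩ := h0τ
        have := S.star_len hm
        obtain ⟨α, hα, ht, hgt⟩ := h2σ
        omega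
      · by_cases h2τ : ∃ α, α ∈ S.r₀.d0 ∧ (S.v0' α).take τ.length = τ ∧ S.r₀.nOf < τ.length
        · obtain ⟨α, hα, htα, hgtα⟩ := h2σ
          obtain ⟨β, hβ, htβ, hgtβ⟩ := h2τ
          rw [S.g_B hlσ hα htα hgtα, S.g_B hlτ hβ htβ hgtβ, hl] at he
          have hαβ : α = β := by
            by_cases hc : τ.length = S.n2
            · rw [if_pos hc, if_pos hc] at he
              exact S.c_inj (S.old_mem_dom2 hα) (S.old_mem_dom2 hβ) (by omega)
            · rw [if_neg hc, if_neg hc] at he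
              by_contra hne
              exact S.hED (τ.length - 1) (by omega) (by omega) α hα β hβ hne he
          rw [← htα, ← htβ, hαβ, hl]
        · obtain ⟨α, hα, htα, hgtα⟩ := h2σ
          rw [S.g_B hlσ hα htα hgtα, S.g_C h0τ h2τ] at he
          have h1 := S.bound_c (S.old_mem_dom2 hα)
          have h2 := S.bound_pf (S.old_mem_dom2 hα) (show σ.length - 1 < S.n2 by omega)
          split at he <;> omega
    · by_cases h0τ : ∃ m, (τ, m) ∈ S.r₀.star
      · rw [S.g_C h0σ h2σ, S.g_A h0τ] at he
        have := S.bound_star (starVal_mem S.r₀ h0τ)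
        omega
      · by_cases h2τ : ∃ α, α ∈ S.r₀.d0 ∧ (S.v0' α).take τ.length = τ ∧ S.r₀.nOf < τ.length
        · obtain ⟨β, hβ, htβ, hgtβ⟩ := h2τ
          rw [S.g_C h0σ h2σ, S.g_B hlτ hβ htβ hgtβ] at he
          have h1 := S.bound_c (S.old_mem_dom2 hβ)
          have h2 := S.bound_pf (S.old_mem_dom2 hβ) (show τ.length - 1 < S.n2 by omega)
          split at he <;> omega
        · rw [S.g_C h0σ h2σ, S.g_C h0τ h2τ] at he
          exact Encodable.encode_injective (show Encodable.encode σ = Encodable.encode τ by omega)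

theorem mem_star2 {σ : List ℕ} {m : ℕ} : (σ, m) ∈ S.star2 ↔ σ ∈ S.P ∧ m = S.g σ := by
  simp only [star2, Finset.mem_image]
  constructor
  · rintro ⟨ρ, hρ, h⟩
    rw [Prod.mk.injEq] at h
    obtain ⟨rfl, rfl⟩ := h
    exact ⟨hρ, rfl⟩
  · rintro ⟨h1, rfl⟩
    exact ⟨σ, h1, rfl⟩

theorem domstar2 : ∀ σ : List ℕ, (∃ m, (σ, m) ∈ S.star2) ↔ ∃ α ∈ S.dom2, σ <+: S.v0' α := by
  intro σ
  rw [← S.mem_P]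
  constructor
  · rintro ⟨m, hm⟩
    exact (S.mem_star2.mp hm).1
  · intro h
    exact ⟨S.g σ, S.mem_star2.mpr ⟨h, rfl⟩⟩

theorem starFun2 : ∀ σ m m', (σ, m) ∈ S.star2 → (σ, m') ∈ S.star2 → m = m' := by
  intro σ m m' h1 h2
  rw [(S.mem_star2.mp h1).2, (S.mem_star2.mp h2).2]

theorem starInj2 : ∀ σ τ m, (σ, m) ∈ S.star2 → (τ, m) ∈ S.star2 → σ.length = τ.length →
    σ = τ := by
  intro σ τ m h1 h2 hl
  obtain ⟨hσ, hm1⟩ := S.mem_star2.mp h1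
  obtain ⟨hτ, hm2⟩ := S.mem_star2.mp h2
  exact S.g_inj hσ hτ hl (by rw [← hm1, ← hm2])

theorem junk0' : ∀ α ∉ S.dom2, S.v0' α = [] := by
  intro α h
  simp only [v0']
  rw [if_neg (fun hh => h (S.old_mem_dom2 hh)), if_neg h]

theorem junk1' : ∀ α ∉ S.dom2, S.v1' α = 0 := by
  intro α h
  simp only [v1']
  rw [if_neg (fun hh => h (S.old_mem_dom2 hh)), if_neg h]

theorem v1'_old {α : ι} (h : α ∈ S.r₀.d0) : S.v1' α = S.r₀.v1 α := by
  simp only [v1', if_pos h]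

theorem v1'_new {α : ι} (h1 : α ∉ S.r₀.d0) (h2 : α ∈ S.dom2) : S.v1' α = S.n2 := by
  simp only [v1']
  rw [if_neg h1, if_pos h2]

theorem v1'_le : ∀ α ∈ S.dom2, S.v1' α ≤ S.n2 := by
  intro α hα
  have hn2 := S.n2_def
  by_cases h : α ∈ S.r₀.d0
  · rw [S.v1'_old h]
    have h1 := S.hv1₀ α h
    have h2 := S.hnle
    omega
  · rw [S.v1'_new h hα]

theorem dist_v0' : ∀ α ∈ S.dom2, ∀ β ∈ S.dom2, α ≠ β → S.v0' α ≠ S.v0' β := by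
  intro α hα β hβ hne heq
  by_cases h1 : α ∈ S.r₀.d0 <;> by_cases h2 : β ∈ S.r₀.d0
  · apply S.hdist₀ α h1 β h2 hne
    have h0 : ∀ γ, γ ∈ S.r₀.d0 → (S.v0' γ).take S.r₀.nOf = S.r₀.v0 γ := by
      intro γ hγ
      rw [S.take_v0'_old hγ le_rfl, ← S.hlen0 γ hγ, List.take_length]
    rw [← h0 α h1, ← h0 β h2, heq]
  · have e1 := S.getD_last_old h1
    have e2 := S.getD_last_new h2 hβ
    have e3 := S.c_pos β
    rw [heq, e2] at e1
    omega
  · have e1 := S.getD_last_new h1 hα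
    have e2 := S.getD_last_old h2
    have e3 := S.c_pos α
    rw [heq, e2] at e1
    omega
  · have e1 := S.getD_last_new h1 hα
    have e2 := S.getD_last_new h2 hβ
    rw [heq, e2] at e1
    exact hne (S.c_inj hα hβ (by omega))

theorem star0_sub : S.r₀.star ⊆ S.star2 := by
  intro x hx
  obtain ⟨σ, m⟩ := x
  obtain ⟨α, hα, hpre⟩ := (S.hdomstar σ).mp ⟨m, hx⟩
  have hP : σ ∈ S.P := S.mem_P.mpr ⟨α, S.old_mem_dom2 hα, hpre.trans (S.prefix_v0' hα)⟩
  exact S.mem_star2.mpr ⟨hP, by rw [S.g_A ⟨m, hx⟩]; exact (starVal_eq S.r₀ hx).symm⟩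

end Setup

end Proj16

theorem stmt16 : ∀ r₀ ∈ RCond.D Omega2T, ∀ p₁ : EDCond Omega2T, p₁ ≤ RCond.proj r₀ →
    ∃ r₂ ∈ RCond.D Omega2T, r₂ ≤ r₀ ∧ RCond.proj r₂ ≤ p₁ := by
  classical
  intro r₀ hr₀ p₁ hle
  obtain ⟨n', hstar₀, hd01, hlen', hdist₀, hv1', hdomstar⟩ := hr₀
  obtain ⟨hsub, hnle, hval, hED⟩ := hle
  have hplen : (RCond.proj r₀).len = r₀.nOf := rfl
  have hlen0 : ∀ α ∈ r₀.d0, (r₀.v0 α).length = r₀.nOf := by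
    intro α hα
    have hne : r₀.d0.Nonempty := ⟨α, hα⟩
    rw [RCond.nOf, dif_pos hne, hlen' α hα, hlen' _ hne.choose_spec]
  have hv1₀ : ∀ α ∈ r₀.d0, r₀.v1 α ≤ r₀.nOf := by
    intro α hα
    have h1 := hlen' α hα
    have h2 := hlen0 α hα
    have h3 := hv1' α (by rw [← hd01]; exact hα)
    omega
  have h0lt : (0 : Ordinal.{0}) < omega2 := by
    rw [omega2, Cardinal.lt_ord]
    simpa using Cardinal.aleph_pos 2
  have hnle' : r₀.nOf ≤ p₁.len := hnle
  let S : Proj16.Setup Omega2T :=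
    ⟨r₀, p₁, ⟨0, h0lt⟩, hlen0, hdist₀, hv1₀, hdomstar, hsub, hnle, hval, hED⟩
  let r₂ : RCond Omega2T :=
    ⟨S.dom2, S.dom2, S.v0', S.v1', true, S.star2, S.junk0', S.junk1',
      fun h => Bool.noConfusion h, S.starFun2, S.starInj2⟩
  have hn2def : S.n2 = p₁.len + 1 := rfl
  have hnOf2 : r₂.nOf = S.n2 :=
    Proj16.nOf_eq r₂ ⟨_, Finset.mem_insert_self _ _⟩ S.len_v0'
  have hSnOf : S.r₀.nOf = r₀.nOf := rfl
  have hsv : ∀ σ ∈ S.P, r₂.starVal σ = S.g σ := fun σ h =>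
    Proj16.starVal_eq r₂ (S.mem_star2.mpr ⟨h, rfl⟩)
  refine ⟨r₂, ⟨S.n2, rfl, rfl, S.len_v0', S.dist_v0', S.v1'_le, S.domstar2⟩, ?_, ?_⟩
  · exact ⟨fun α hα => S.old_mem_dom2 hα,
      fun α hα => S.old_mem_dom2 (by rw [hd01]; exact hα),
      fun _ => rfl,
      fun α hα => S.prefix_v0' hα,
      fun α hα => (S.v1'_old (by rw [hd01]; exact hα)).symm,
      fun _ => S.star0_sub⟩
  · refine ⟨Finset.subset_insert _ _, ?_, ?_, ?_⟩
    · show p₁.len ≤ r₂.nOf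
      rw [hnOf2, hn2def]
      omega
    · intro α hα i hi
      have hαd : α ∈ r₂.d0 := Finset.mem_insert_of_mem hα
      have hi2 : i < r₂.nOf := by rw [hnOf2, hn2def]; omega
      by_cases hold : α ∈ r₀.d0
      · by_cases hlt : i < r₀.v1 α
        · rw [Proj16.proj_f_lt r₂ hαd hi2
            (show i < S.v1' α by rw [S.v1'_old hold]; exact hlt)]
          have hio : i < r₀.nOf := by have := hv1₀ α hold; omega
          have hb : (r₂.v0 α).getD i 0 = (r₀.v0 α).getD i 0 := S.getD_old_lt hold hio
          rw [hb, hval α hold i (by rw [hplen]; omega),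
            Proj16.proj_f_lt r₀ hold hio hlt]
        · have hge : r₂.v1 α ≤ i := by
            show S.v1' α ≤ i
            rw [S.v1'_old hold]
            show r₀.v1 α ≤ i
            omega
          rw [Proj16.proj_f_ge r₂ hαd hi2 hge]
          by_cases hio : i < r₀.nOf
          · have htake : (r₂.v0 α).take (i + 1) = (r₀.v0 α).take (i + 1) :=
              S.take_v0'_old hold (by omega)
            have hPmem : (r₀.v0 α).take (i + 1) ∈ S.P :=
              S.mem_P.mpr ⟨α, S.old_mem_dom2 hold,
                (List.take_prefix _ _).trans (S.prefix_v0' hold)⟩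
            rw [htake, hsv _ hPmem,
              S.g_A ((hdomstar _).mpr ⟨α, hold, List.take_prefix _ _⟩),
              hval α hold i (by rw [hplen]; omega),
              Proj16.proj_f_ge r₀ hold hio (by omega)]
          · have hPmem : (r₂.v0 α).take (i + 1) ∈ S.P :=
              S.mem_P.mpr ⟨α, S.old_mem_dom2 hold, List.take_prefix _ _⟩
            rw [hsv _ hPmem]
            have hlth : ((S.v0' α).take (i + 1)).length = i + 1 := by
              rw [List.length_take, S.len_v0' α (S.old_mem_dom2 hold)]
              omega
            rw [S.g_B (by rw [hlth]; omega) hold (by rw [hlth]) (by rw [hlth]; omega),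
              hlth, if_neg (by omega), Nat.add_sub_cancel]
      · have hnlt : i < r₂.v1 α := by
          show i < S.v1' α
          rw [S.v1'_new hold (Finset.mem_insert_of_mem hα), hn2def]
          omega
        rw [Proj16.proj_f_lt r₂ hαd hi2 hnlt]
        exact S.getD_new hold (Finset.mem_insert_of_mem hα) hi
    · intro i hi1 hi2 α hα β hβ hne
      have hieq : i = p₁.len := by
        have h := hi2
        rw [show (RCond.proj r₂).len = r₂.nOf from rfl, hnOf2, hn2def] at h
        omega
      subst hieq
      have hcompute : ∀ γ, γ ∈ p₁.dom →
          (RCond.proj r₂).f γ p₁.len = (if γ ∈ r₀.d0 then 2 * S.c γ + 1 else 2 * S.c γ) := by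
        intro γ hγ
        have hγ2 : γ ∈ r₂.d0 := Finset.mem_insert_of_mem hγ
        have hilt : p₁.len < r₂.nOf := by rw [hnOf2, hn2def]; omega
        by_cases hold : γ ∈ r₀.d0
        · rw [if_pos hold, Proj16.proj_f_ge r₂ hγ2 hilt
            (show S.v1' γ ≤ p₁.len by
              rw [S.v1'_old hold]; show r₀.v1 γ ≤ p₁.len; have := hv1₀ γ hold; omega)]
          have hPmem : (r₂.v0 γ).take (p₁.len + 1) ∈ S.P :=
            S.mem_P.mpr ⟨γ, S.old_mem_dom2 hold, List.take_prefix _ _⟩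
          have hlth : ((S.v0' γ).take (p₁.len + 1)).length = p₁.len + 1 := by
            rw [List.length_take, S.len_v0' γ (S.old_mem_dom2 hold)]
            omega
          rw [hsv _ hPmem,
            S.g_B (by rw [hlth]; omega) hold (by rw [hlth]) (by rw [hlth]; omega),
            hlth, if_pos hn2def.symm]
        · rw [if_neg hold, Proj16.proj_f_lt r₂ hγ2 hilt
            (show p₁.len < S.v1' γ by
              rw [S.v1'_new hold (Finset.mem_insert_of_mem hγ), hn2def]; omega)]
          exact S.getD_last_new hold (Finset.mem_insert_of_mem hγ)
      rw [hcompute α hα, hcompute β hβ]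
      have hcc : S.c α = S.c β → α = β := fun h =>
        S.c_inj (Finset.mem_insert_of_mem hα) (Finset.mem_insert_of_mem hβ) h
      by_cases h1 : α ∈ r₀.d0 <;> by_cases h2 : β ∈ r₀.d0
      · rw [if_pos h1, if_pos h2]
        intro h
        exact hne (hcc (by omega))
      · rw [if_pos h1, if_neg h2]
        omega
      · rw [if_neg h1, if_pos h2]
        omega
      · rw [if_neg h1, if_neg h2]
        intro h
        exact hne (hcc (by omega))
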